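/- Let p ≡ 1 (mod 8) be prime with p = a² + b² = c² + 8d², where a, b, c, d are integers, a odd, b even, and a + b ≡ 1 (mod 4). Then (a-1)² + b² ≡ 0 (mod 32) if and only if d is even. -/

import Mathlib

lemma sq_dvd_prime_aux {p : ℕ} (hp : p.Prime) {g : ℕ} (h : g ^ 2 ∣ p) : g = 1 := by
  have hg : g ∣ p := dvd_trans (dvd_pow_self g two_ne_zero) h
  rcases hp.eq_one_or_self_of_dvd g hg with h1 | h1
  · exact h1
  · subst h1
    have hle := Nat.le_of_dvd hp.pos h
    nlinarith [hp.two_le]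

lemma pm_cast_inj {p : ℕ} (hp : 2 < p) {x y : ℤ}
    (hx : x = 1 ∨ x = -1) (hy : y = 1 ∨ y = -1) (h : (x : ZMod p) = (y : ZMod p)) : x = y := by
  rcases hx with rfl | rfl <;> rcases hy with rfl | rfl <;> try rfl
  all_goals {
    exfalso
    have h2 : ((2 : ℤ) : ZMod p) = 0 := by
      push_cast at h ⊢
      first
      | linear_combination h
      | linear_combination -h
    rw [ZMod.intCast_zmod_eq_zero_iff_dvd] at h2
    have := Int.le_of_dvd (by norm_num) h2
    omega }

lemma pm_mul {x y : ℤ} (hx : x = 1 ∨ x = -1) (hy : y = 1 ∨ y = -1) :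
    x * y = 1 ∨ x * y = -1 := by
  rcases hx with rfl | rfl <;> rcases hy with rfl | rfl <;> norm_num

lemma mulself_mod2 (x : ℤ) : x * x % 2 = x % 2 := by
  rcases Int.even_or_odd x with ⟨u, rfl⟩ | ⟨u, rfl⟩
  · have h : (u + u) * (u + u) = 2 * (2 * (u * u)) := by ring
    generalize u * u = U at h
    rw [h]; omega
  · have h : (2 * u + 1) * (2 * u + 1) = 2 * (2 * (u * u) + 2 * u) + 1 := by ring
    generalize u * u = U at h
    rw [h]; omega

lemma oddsq_nat (n : ℕ) (hn : n % 2 = 1) :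
    (n ^ 2 % 16 = 1 ↔ (n % 8 = 1 ∨ n % 8 = 7)) ∧ (n ^ 2 % 16 = 1 ∨ n ^ 2 % 16 = 9) := by
  obtain ⟨q, r, hr8, rfl⟩ : ∃ q r, r < 8 ∧ n = 8 * q + r := ⟨n / 8, n % 8, by omega, by omega⟩
  have hrc : r = 1 ∨ r = 3 ∨ r = 5 ∨ r = 7 := by omega
  have hexp : (8 * q + r) ^ 2 = 64 * (q * q) + 16 * (q * r) + r * r := by ring
  generalize hQ : q * q = Q at hexp
  rcases hrc with rfl | rfl | rfl | rfl <;> rw [hexp] <;> omega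

lemma flip_jacobi {p : ℕ} (hp4 : p % 4 = 1) (x : ℤ) (hx : x % 2 = 1) :
    jacobiSym x p = jacobiSym (p : ℤ) x.natAbs := by
  have hodd : x.natAbs % 2 = 1 := by omega
  have hodd' : Odd x.natAbs := Nat.odd_iff.mpr hodd
  have hrec := jacobiSym.quadratic_reciprocity_one_mod_four hp4 hodd'
  rcases Int.natAbs_eq x with h | h
  · conv_lhs => rw [h]
    exact hrec.symm
  · conv_lhs => rw [h]
    have hp2 : p % 2 = 1 := by omega
    rw [jacobiSym.neg _ (Nat.odd_iff.mpr hp2), ZMod.χ₄_nat_one_mod_four hp4, one_mul]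
    exact hrec.symm

lemma oddsq_int (x : ℤ) (hx : x % 2 = 1) :
    (x ^ 2 % 16 = 1 ↔ (x.natAbs % 8 = 1 ∨ x.natAbs % 8 = 7)) ∧
      (x ^ 2 % 16 = 1 ∨ x ^ 2 % 16 = 9) := by
  have hodd : x.natAbs % 2 = 1 := by omega
  obtain ⟨h2, h3⟩ := oddsq_nat x.natAbs hodd
  have h1 : x ^ 2 = ((x.natAbs : ℤ)) ^ 2 := by rw [← sq_abs, Int.abs_eq_natAbs]
  have h4 : x ^ 2 % 16 = ((x.natAbs ^ 2 % 16 : ℕ) : ℤ) := by rw [h1]; push_cast; ring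
  generalize hN : x.natAbs ^ 2 = N at h2 h3 h4
  generalize hX : x ^ 2 = X at h4 ⊢
  omega

lemma gcd_natAbs_right (x y : ℤ) : Int.gcd x ((y.natAbs : ℤ)) = Int.gcd x y := by
  simp [Int.gcd, Int.natAbs_abs]

theorem stmt14 (p : ℕ) (hp : p.Prime) (h8 : p % 8 = 1)
    (a b c d : ℤ) (hab : (p : ℤ) = a ^ 2 + b ^ 2) (hcd : (p : ℤ) = c ^ 2 + 8 * d ^ 2)
    (ha : Odd a) (hb : Even b) (habm : (a + b) % 4 = 1) :
    ((a - 1) ^ 2 + b ^ 2) % 32 = 0 ↔ Even d := by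
  haveI : Fact p.Prime := ⟨hp⟩
  have hp2le := hp.two_le
  have hpgt : 2 < p := by omega
  have hp4 : p % 4 = 1 := by omega
  have hp2 : p % 2 = 1 := by omega
  have hpodd : Odd p := Nat.odd_iff.mpr hp2
  obtain ⟨w, hw⟩ : ∃ w, p = 8 * w + 1 := ⟨p / 8, by omega⟩
  have hpz : (p : ℤ) % 8 = 1 := by omega
  obtain ⟨α, hα⟩ := ha
  obtain ⟨β, hβ⟩ := hb
  -- b ≡ 0 mod 4
  have hb4 : b % 4 = 0 := by
    rcases Int.even_or_odd β with ⟨δ, hδ⟩ | ⟨δ, hδ⟩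
    · omega
    · exfalso
      obtain ⟨γ, hγ⟩ := Int.even_mul_succ_self α
      have hcomp : (p : ℤ) = 8 * γ + 16 * (δ * δ) + 16 * δ + 5 := by
        rw [hab, hα, hβ, hδ]
        linear_combination 4 * hγ
      generalize δ * δ = D2 at hcomp
      omega
  have ha4 : a % 4 = 1 := by omega
  -- Step A
  have hstepA : ((a - 1) ^ 2 + b ^ 2) % 32 = 0 ↔ (a + b) % 8 = 1 := by
    obtain ⟨k, hk⟩ : ∃ k, a = 4 * k + 1 := ⟨(a - 1) / 4, by omega⟩
    obtain ⟨m, hm⟩ : ∃ m, b = 4 * m := ⟨b / 4, by omega⟩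
    have hx : (a - 1) ^ 2 + b ^ 2 = 16 * (k * k) + 16 * (m * m) := by rw [hk, hm]; ring
    have hab8 : a + b = 4 * (k + m) + 1 := by omega
    have hkk := mulself_mod2 k
    have hmm := mulself_mod2 m
    rw [hx, hab8]
    generalize k * k = K2 at hkk ⊢
    generalize m * m = M2 at hmm ⊢
    omega
  -- coprimality
  have hgab : Int.gcd a b = 1 := by
    apply sq_dvd_prime_aux hp
    have h1 : ((Int.gcd a b : ℤ)) ^ 2 ∣ (p : ℤ) := by
      rw [hab]
      exact dvd_add (pow_dvd_pow_of_dvd (Int.gcd_dvd_left _ _) 2)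
        (pow_dvd_pow_of_dvd (Int.gcd_dvd_right _ _) 2)
    exact_mod_cast h1
  have hgcd8 : Int.gcd c d = 1 := by
    apply sq_dvd_prime_aux hp
    have h1 : ((Int.gcd c d : ℤ)) ^ 2 ∣ (p : ℤ) := by
      rw [hcd]
      exact dvd_add (pow_dvd_pow_of_dvd (Int.gcd_dvd_left _ _) 2)
        (Dvd.dvd.mul_left (pow_dvd_pow_of_dvd (Int.gcd_dvd_right _ _) 2) 8)
    exact_mod_cast h1
  have hpint : Prime (p : ℤ) := Nat.prime_iff_prime_int.mp hp
  have hple : (2 : ℤ) ≤ (p : ℤ) := by exact_mod_cast hp2le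
  -- p divides none of a b c d
  have hpa : ¬ (p : ℤ) ∣ a := by
    intro h
    have hpp : (p : ℤ) ∣ a ^ 2 + b ^ 2 := hab ▸ dvd_refl _
    have hb2 : (p : ℤ) ∣ b ^ 2 := (dvd_add_right (dvd_pow h two_ne_zero)).mp hpp
    have hbb : (p : ℤ) ∣ b := hpint.dvd_of_dvd_pow hb2
    have hg : (p : ℤ) ∣ (Int.gcd a b : ℤ) := Int.dvd_coe_gcd h hbb
    rw [hgab] at hg
    have := Int.le_of_dvd one_pos hg
    omega
  have hpb : ¬ (p : ℤ) ∣ b := by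
    intro h
    have hpp : (p : ℤ) ∣ a ^ 2 + b ^ 2 := hab ▸ dvd_refl _
    have ha2 : (p : ℤ) ∣ a ^ 2 := (dvd_add_left (dvd_pow h two_ne_zero)).mp hpp
    have haa : (p : ℤ) ∣ a := hpint.dvd_of_dvd_pow ha2
    have hg : (p : ℤ) ∣ (Int.gcd a b : ℤ) := Int.dvd_coe_gcd haa h
    rw [hgab] at hg
    have := Int.le_of_dvd one_pos hg
    omega
  have hpd : ¬ (p : ℤ) ∣ d := by
    intro h
    have hpp : (p : ℤ) ∣ c ^ 2 + 8 * d ^ 2 := hcd ▸ dvd_refl _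
    have hc2 : (p : ℤ) ∣ c ^ 2 := by
      have h8d : (p : ℤ) ∣ 8 * d ^ 2 := Dvd.dvd.mul_left (dvd_pow h two_ne_zero) 8
      exact (dvd_add_right h8d).mp (by rwa [add_comm] at hpp)
    have hcc : (p : ℤ) ∣ c := hpint.dvd_of_dvd_pow hc2
    have hg : (p : ℤ) ∣ (Int.gcd c d : ℤ) := Int.dvd_coe_gcd hcc h
    rw [hgcd8] at hg
    have := Int.le_of_dvd one_pos hg
    omega
  have hpc : ¬ (p : ℤ) ∣ c := by
    intro h
    have hpp : (p : ℤ) ∣ c ^ 2 + 8 * d ^ 2 := hcd ▸ dvd_refl _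
    have h8d : (p : ℤ) ∣ 8 * d ^ 2 := (dvd_add_right (dvd_pow h two_ne_zero)).mp hpp
    rcases hpint.dvd_mul.mp h8d with h8 | hd2
    · have := Int.le_of_dvd (by norm_num) h8
      omega
    · exact hpd (hpint.dvd_of_dvd_pow hd2)
  -- ZMod setup
  have hA0 : ((a : ℤ) : ZMod p) ≠ 0 := fun h => hpa ((ZMod.intCast_zmod_eq_zero_iff_dvd a p).mp h)
  have hB0 : ((b : ℤ) : ZMod p) ≠ 0 := fun h => hpb ((ZMod.intCast_zmod_eq_zero_iff_dvd b p).mp h)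
  have hC0 : ((c : ℤ) : ZMod p) ≠ 0 := fun h => hpc ((ZMod.intCast_zmod_eq_zero_iff_dvd c p).mp h)
  have hD0 : ((d : ℤ) : ZMod p) ≠ 0 := fun h => hpd ((ZMod.intCast_zmod_eq_zero_iff_dvd d p).mp h)
  have h20 : ((2 : ℤ) : ZMod p) ≠ 0 := by
    intro h
    rw [ZMod.intCast_zmod_eq_zero_iff_dvd] at h
    have := Int.le_of_dvd (by norm_num) h
    omega
  have hABK : ((a : ZMod p)) ^ 2 + ((b : ZMod p)) ^ 2 = 0 := by
    have h := congrArg (fun z : ℤ => (z : ZMod p)) hab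
    push_cast at h
    rw [ZMod.natCast_self] at h
    exact h.symm
  have hCDK : ((c : ZMod p)) ^ 2 + 8 * ((d : ZMod p)) ^ 2 = 0 := by
    have h := congrArg (fun z : ℤ => (z : ZMod p)) hcd
    push_cast at h
    rw [ZMod.natCast_self] at h
    exact h.symm
  have hS0 : (((a + b : ℤ)) : ZMod p) ≠ 0 := by
    intro h
    push_cast at h
    have hsq : ((a : ZMod p) + b) ^ 2 = 2 * (a : ZMod p) * (b : ZMod p) := by
      linear_combination hABK
    rw [h] at hsq
    have hne : (2 : ZMod p) * (a : ZMod p) * (b : ZMod p) ≠ 0 := by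
      have h2' : (2 : ZMod p) ≠ 0 := by exact_mod_cast h20
      exact mul_ne_zero (mul_ne_zero h2' hA0) hB0
    exact hne (by rw [← hsq]; ring)
  -- the key algebraic identity
  have e3 : (((a : ZMod p) + b) * 2 * b * d) ^ 4 = -(((a : ZMod p) * c * b) ^ 4) := by
    linear_combination
      (16 * (b : ZMod p) ^ 4 * (d : ZMod p) ^ 4 * ((a : ZMod p) ^ 2 + (b : ZMod p) ^ 2) +
        64 * (a : ZMod p) * (b : ZMod p) ^ 5 * (d : ZMod p) ^ 4 +
        (a : ZMod p) ^ 2 * (b : ZMod p) ^ 4 * (c : ZMod p) ^ 4) * hABK +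
      (-(a : ZMod p) ^ 2 * (b : ZMod p) ^ 6 * ((c : ZMod p) ^ 2 - 8 * (d : ZMod p) ^ 2)) * hCDK
  have e4' : ((a : ZMod p) + b) ^ 4 * 2 ^ 4 * (b : ZMod p) ^ 4 * (d : ZMod p) ^ 4 =
      (-1) * ((a : ZMod p) ^ 4 * (c : ZMod p) ^ 4 * (b : ZMod p) ^ 4) := by
    linear_combination e3
  have e4 : ((a : ZMod p) + b) ^ (4 * w) * (2 : ZMod p) ^ (4 * w) * (b : ZMod p) ^ (4 * w) *
        (d : ZMod p) ^ (4 * w) =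
      (-1 : ZMod p) ^ w * ((a : ZMod p) ^ (4 * w) * (c : ZMod p) ^ (4 * w) *
        (b : ZMod p) ^ (4 * w)) := by
    simp only [pow_mul, ← mul_pow]
    congr 1
    linear_combination e3
  -- legendre symbol: cast equation
  have hdiv : p / 2 = 4 * w := by omega
  have hLpow : ∀ x : ℤ, ((legendreSym p x : ℤ) : ZMod p) = (x : ZMod p) ^ (4 * w) := by
    intro x; rw [legendreSym.eq_pow, hdiv]
  have big : ((legendreSym p (a + b) * legendreSym p 2 * legendreSym p b * legendreSym p d : ℤ) :
        ZMod p) =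
      (((-1) ^ w * (legendreSym p a * legendreSym p c * legendreSym p b) : ℤ) : ZMod p) := by
    push_cast
    rw [hLpow, hLpow, hLpow, hLpow, hLpow, hLpow]
    push_cast
    linear_combination e4
  have lS := legendreSym.eq_one_or_neg_one p hS0
  have l2 := legendreSym.eq_one_or_neg_one p h20
  have lA := legendreSym.eq_one_or_neg_one p hA0
  have lB := legendreSym.eq_one_or_neg_one p hB0
  have lC := legendreSym.eq_one_or_neg_one p hC0
  have lD := legendreSym.eq_one_or_neg_one p hD0
  have lW : ((-1 : ℤ)) ^ w = 1 ∨ ((-1 : ℤ)) ^ w = -1 := by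
    rcases Nat.even_or_odd w with h | h
    · exact Or.inl (Even.neg_one_pow h)
    · exact Or.inr (Odd.neg_one_pow h)
  have E : legendreSym p (a + b) * legendreSym p 2 * legendreSym p b * legendreSym p d =
      (-1) ^ w * (legendreSym p a * legendreSym p c * legendreSym p b) :=
    pm_cast_inj hpgt (pm_mul (pm_mul (pm_mul lS l2) lB) lD)
      (pm_mul lW (pm_mul (pm_mul lA lC) lB)) big
  -- χ₈ value at p
  have hχ8p : ZMod.χ₈ (p : ℕ) = 1 := by
    rw [ZMod.χ₈_nat_eq_if_mod_eight, if_neg (by omega), if_pos (Or.inl h8)]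
  have hL2 : legendreSym p 2 = 1 := by
    rw [legendreSym.at_two (by omega : p ≠ 2), hχ8p]
  -- L(a+b) via reciprocity
  have hsodd2 : (a + b) % 2 = 1 := by omega
  have hLs_eq : legendreSym p (a + b) = ZMod.χ₈ ((a + b).natAbs) := by
    rw [jacobiSym.legendreSym.to_jacobiSym, flip_jacobi hp4 (a + b) hsodd2]
    have hdvd : (((a + b).natAbs : ℤ)) ∣ 2 * a ^ 2 - (p : ℤ) := by
      rw [hab]
      exact Int.natAbs_dvd.mpr ⟨a - b, by ring⟩
    have hmod : (p : ℤ) % ((a + b).natAbs : ℕ) = (2 * a ^ 2) % ((a + b).natAbs : ℕ) :=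
      Int.modEq_iff_dvd.mpr hdvd
    have hg1 : Int.gcd a (((a + b).natAbs : ℤ)) = 1 := by
      rw [gcd_natAbs_right]
      have hco : IsCoprime a b := Int.isCoprime_iff_gcd_eq_one.mpr hgab
      have hco2 : IsCoprime a (a + b) := by
        have := hco.add_mul_left_right 1
        simpa [add_comm] using this
      exact Int.isCoprime_iff_gcd_eq_one.mp hco2
    rw [jacobiSym.mod_left' hmod, jacobiSym.mul_left, jacobiSym.sq_one' hg1, mul_one,
      jacobiSym.at_two (Nat.odd_iff.mpr (by omega))]
  have hLs_val : legendreSym p (a + b) = 1 ↔ (a + b) % 8 = 1 := by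
    rw [hLs_eq, ZMod.χ₈_nat_eq_if_mod_eight]
    rcases Int.natAbs_eq (a + b) with hh | hh <;> split_ifs <;>
      first
      | omega
      | (rw [false_iff]; omega)
  -- c is odd
  have hc2 : c % 2 = 1 := by
    rcases Int.even_or_odd c with ⟨γ, hγ⟩ | ⟨γ, hγ⟩
    · exfalso
      have hcomp : (p : ℤ) = 2 * (2 * (γ * γ) + 4 * (d * d)) := by
        rw [hcd, hγ]; ring
      generalize γ * γ = G at hcomp
      generalize d * d = DD at hcomp
      omega
    · omega
  have hLc_eq : legendreSym p c = ZMod.χ₈ (c.natAbs) := by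
    rw [jacobiSym.legendreSym.to_jacobiSym, flip_jacobi hp4 c hc2]
    have hdvd : ((c.natAbs : ℤ)) ∣ 2 * (2 * d) ^ 2 - (p : ℤ) := by
      rw [hcd]
      exact Int.natAbs_dvd.mpr ⟨-c, by ring⟩
    have hmod : (p : ℤ) % (c.natAbs : ℕ) = (2 * (2 * d) ^ 2) % (c.natAbs : ℕ) :=
      Int.modEq_iff_dvd.mpr hdvd
    have hg1 : Int.gcd (2 * d) ((c.natAbs : ℤ)) = 1 := by
      rw [gcd_natAbs_right]
      have h2c : IsCoprime (2 : ℤ) c := by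
        rw [Int.isCoprime_iff_gcd_eq_one]
        have hcn : c.natAbs % 2 = 1 := by omega
        have : Nat.gcd 2 c.natAbs = 1 :=
          Nat.prime_two.coprime_iff_not_dvd.mpr (by omega)
        simpa [Int.gcd] using this
      have hdc : IsCoprime d c := (Int.isCoprime_iff_gcd_eq_one.mpr hgcd8).symm
      exact Int.isCoprime_iff_gcd_eq_one.mp (IsCoprime.mul_left h2c hdc)
    rw [jacobiSym.mod_left' hmod, jacobiSym.mul_left, jacobiSym.sq_one' hg1, mul_one,
      jacobiSym.at_two (Nat.odd_iff.mpr (by omega))]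
  have hLc_val : legendreSym p c = 1 ↔ c ^ 2 % 16 = 1 := by
    obtain ⟨hciff, _⟩ := oddsq_int c hc2
    rw [hLc_eq, ZMod.χ₈_nat_eq_if_mod_eight]
    split_ifs <;> generalize c ^ 2 = X at hciff ⊢ <;>
      first
      | omega
      | (rw [false_iff]; omega)
  -- L(a) = 1
  have hLa : legendreSym p a = 1 := by
    rw [jacobiSym.legendreSym.to_jacobiSym, flip_jacobi hp4 a (by omega)]
    have hdvd : ((a.natAbs : ℤ)) ∣ b ^ 2 - (p : ℤ) := by
      rw [hab]
      exact Int.natAbs_dvd.mpr ⟨-a, by ring⟩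
    have hmod : (p : ℤ) % (a.natAbs : ℕ) = (b ^ 2) % (a.natAbs : ℕ) :=
      Int.modEq_iff_dvd.mpr hdvd
    have hg1 : Int.gcd b ((a.natAbs : ℤ)) = 1 := by
      rw [gcd_natAbs_right, Int.gcd_comm]
      exact hgab
    rw [jacobiSym.mod_left' hmod, jacobiSym.sq_one' hg1]
  -- L(d) = 1
  have hLd : legendreSym p d = 1 := by
    have hd0 : d ≠ 0 := fun h => hpd (h ▸ dvd_zero _)
    have hn0 : d.natAbs ≠ 0 := by omega
    set t := d.natAbs.factorization 2 with ht
    set u := ordCompl[2] d.natAbs with hu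
    have hord : 2 ^ t * u = d.natAbs := Nat.ordProj_mul_ordCompl_eq_self d.natAbs 2
    have hu2 : ¬ 2 ∣ u := Nat.not_dvd_ordCompl Nat.prime_two hn0
    have huodd : Odd u := Nat.odd_iff.mpr (by omega)
    have hudvd : (u : ℤ) ∣ d := by
      refine dvd_trans ?_ (Int.natAbs_dvd.mpr dvd_rfl)
      exact_mod_cast Nat.ordCompl_dvd d.natAbs 2
    have hJu : jacobiSym (u : ℤ) p = 1 := by
      rw [← jacobiSym.quadratic_reciprocity_one_mod_four hp4 huodd]
      have hdvd2 : ((u : ℤ)) ∣ c ^ 2 - (p : ℤ) := by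
        have h8d : (u : ℤ) ∣ 8 * d ^ 2 := Dvd.dvd.mul_left (dvd_pow hudvd two_ne_zero) 8
        have heq : c ^ 2 - (p : ℤ) = -(8 * d ^ 2) := by rw [hcd]; ring
        rw [heq]
        exact dvd_neg.mpr h8d
      have hmod : (p : ℤ) % (u : ℕ) = (c ^ 2) % (u : ℕ) := Int.modEq_iff_dvd.mpr hdvd2
      rw [jacobiSym.mod_left' hmod]
      apply jacobiSym.sq_one'
      have hco : Nat.Coprime c.natAbs d.natAbs := hgcd8
      have hcu : Nat.Coprime c.natAbs u :=
        Nat.Coprime.coprime_dvd_right (Nat.ordCompl_dvd d.natAbs 2) hco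
      simpa [Int.gcd] using hcu
    have hnval : jacobiSym ((d.natAbs : ℕ) : ℤ) p = 1 := by
      have hcast : ((d.natAbs : ℕ) : ℤ) = (2 : ℤ) ^ t * (u : ℤ) := by exact_mod_cast hord.symm
      rw [hcast, jacobiSym.mul_left, jacobiSym.pow_left, jacobiSym.at_two hpodd, hχ8p,
        one_pow, one_mul, hJu]
    rw [jacobiSym.legendreSym.to_jacobiSym]
    rcases Int.natAbs_eq d with hh | hh
    · conv_lhs => rw [hh]
      exact hnval
    · conv_lhs => rw [hh]
      rw [jacobiSym.neg _ hpodd, ZMod.χ₄_nat_one_mod_four hp4, one_mul]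
      exact hnval
  -- cancel L(b) and conclude the symbol identity
  have hLb_ne : legendreSym p b ≠ 0 := by rcases lB with h | h <;> omega
  have E' : legendreSym p (a + b) = (-1) ^ w * legendreSym p c := by
    apply mul_right_cancel₀ hLb_ne
    rw [hL2, hLa, hLd] at E
    linear_combination E
  -- final bookkeeping
  rw [hstepA, ← hLs_val, E']
  have hrelpw : ((p : ℕ) : ℤ) = 8 * (w : ℤ) + 1 := by exact_mod_cast congrArg (Nat.cast : ℕ → ℤ) hw
  have hrel : 8 * (w : ℤ) = c ^ 2 - 1 + 8 * d ^ 2 := by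
    rw [hcd] at hrelpw
    linarith
  have hd2 : d ^ 2 % 2 = d % 2 := by rw [pow_two]; exact mulself_mod2 d
  obtain ⟨_, hc16⟩ := oddsq_int c hc2
  rcases Nat.even_or_odd w with hwp | hwp <;> rcases lC with hc1 | hc1
  · rw [hc1, Even.neg_one_pow hwp, one_mul]
    have hX : c ^ 2 % 16 = 1 := hLc_val.mp hc1
    have hw2 : w % 2 = 0 := Nat.even_iff.mp hwp
    rw [Int.even_iff]
    generalize c ^ 2 = X at hX hrel
    generalize d ^ 2 = Y at hd2 hrel
    omega
  · rw [hc1, Even.neg_one_pow hwp, one_mul]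
    have hne1 : c ^ 2 % 16 ≠ 1 := fun h => by
      have := hLc_val.mpr h
      omega
    have hw2 : w % 2 = 0 := Nat.even_iff.mp hwp
    rw [Int.even_iff]
    generalize c ^ 2 = X at hne1 hc16 hrel
    generalize d ^ 2 = Y at hd2 hrel
    omega
  · rw [hc1, Odd.neg_one_pow hwp]
    have hX : c ^ 2 % 16 = 1 := hLc_val.mp hc1
    have hw2 : w % 2 = 1 := Nat.odd_iff.mp hwp
    rw [Int.even_iff]
    generalize c ^ 2 = X at hX hrel
    generalize d ^ 2 = Y at hd2 hrel
    omega
  · rw [hc1, Odd.neg_one_pow hwp]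
    have hne1 : c ^ 2 % 16 ≠ 1 := fun h => by
      have := hLc_val.mpr h
      omega
    have hw2 : w % 2 = 1 := Nat.odd_iff.mp hwp
    rw [Int.even_iff]
    generalize c ^ 2 = X at hne1 hc16 hrel
    generalize d ^ 2 = Y at hd2 hrel
    omega
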